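/- Let N_T and K be natural numbers, let h ∈ ℂ^{N_T} (EuclideanSpace ℂ (Fin N_T)) be nonzero, and let g₁, …, g_K ∈ ℂ^{N_T}. For each real N₀ > 0, suppose w(N₀) ∈ ℂ^{N_T} satisfies ‖w(N₀)‖ = 1 and, for every v with ‖v‖ = 1, |⟨h, v⟩|²/(∑_{k=1}^{K} |⟨g_k, v⟩|² + N₀) ≤ |⟨h, w(N₀)⟩|²/(∑_{k=1}^{K} |⟨g_k, w(N₀)⟩|² + N₀). Then |⟨h, w(N₀)⟩|² tends to ‖h‖² as N₀ → ∞. -/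

import Mathlib

open Filter

/-- Low-SNR step of Theorem 1: if `w N₀` is a unit-norm maximizer of the WSLNR
`|⟨h, v⟩|² / (∑ k, |⟨g k, v⟩|² + N₀)` for each noise level `N₀ > 0`, then the achieved
desired channel gain `|⟨h, w N₀⟩|²` tends to `‖h‖²` as `N₀ → ∞`. -/
theorem stmt_4 (N_T K : ℕ) (h : EuclideanSpace ℂ (Fin N_T)) (hh : h ≠ 0)
    (g : Fin K → EuclideanSpace ℂ (Fin N_T))
    (w : ℝ → EuclideanSpace ℂ (Fin N_T))
    (hw_norm : ∀ N₀ : ℝ, 0 < N₀ → ‖w N₀‖ = 1)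
    (hw_max : ∀ N₀ : ℝ, 0 < N₀ → ∀ v : EuclideanSpace ℂ (Fin N_T), ‖v‖ = 1 →
      ‖(inner ℂ h v : ℂ)‖ ^ 2 / (∑ k : Fin K, ‖(inner ℂ (g k) v : ℂ)‖ ^ 2 + N₀) ≤
        ‖(inner ℂ h (w N₀) : ℂ)‖ ^ 2 / (∑ k : Fin K, ‖(inner ℂ (g k) (w N₀) : ℂ)‖ ^ 2 + N₀)) :
    Tendsto (fun N₀ : ℝ => ‖(inner ℂ h (w N₀) : ℂ)‖ ^ 2) atTop (nhds (‖h‖ ^ 2)) := by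
  have hhn : (0 : ℝ) < ‖h‖ := norm_pos_iff.mpr hh
  -- the normalized vector
  set v : EuclideanSpace ℂ (Fin N_T) := (‖h‖⁻¹ : ℂ) • h with hv
  have hvnorm : ‖v‖ = 1 := by
    rw [hv, norm_smul]
    simp [norm_inv, hhn.ne', Complex.norm_real]
  have hinner_v : ‖(inner ℂ h v : ℂ)‖ = ‖h‖ := by
    rw [hv, inner_smul_right, norm_mul, inner_self_eq_norm_sq_to_K]
    push_cast
    simp only [norm_inv, norm_pow, Complex.norm_real, Real.norm_eq_abs, abs_of_pos hhn]
    field_simp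
    simp
  set L : ℝ := ∑ k : Fin K, ‖(inner ℂ (g k) v : ℂ)‖ ^ 2 with hL
  have hL0 : 0 ≤ L := Finset.sum_nonneg fun k _ => sq_nonneg _
  clear_value L
  -- lower bound
  have lower : ∀ N₀ : ℝ, 0 < N₀ →
      ‖h‖ ^ 2 * (N₀ / (L + N₀)) ≤ ‖(inner ℂ h (w N₀) : ℂ)‖ ^ 2 := by
    intro N₀ hN₀
    set S : ℝ := ∑ k : Fin K, ‖(inner ℂ (g k) (w N₀) : ℂ)‖ ^ 2 with hS
    have hS0 : 0 ≤ S := Finset.sum_nonneg fun k _ => sq_nonneg _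
    have hSN : 0 < S + N₀ := by linarith
    have hLN : 0 < L + N₀ := by linarith
    have key := hw_max N₀ hN₀ v hvnorm
    rw [hinner_v, ← hS, ← hL] at key
    calc ‖h‖ ^ 2 * (N₀ / (L + N₀)) = ‖h‖ ^ 2 * N₀ / (L + N₀) := by ring
      _ ≤ ‖h‖ ^ 2 * (S + N₀) / (L + N₀) := by
          apply div_le_div_of_nonneg_right ?_ hLN.le
          have := sq_nonneg ‖h‖
          nlinarith
      _ = ‖h‖ ^ 2 / (L + N₀) * (S + N₀) := by ring
      _ ≤ ‖(inner ℂ h (w N₀) : ℂ)‖ ^ 2 / (S + N₀) * (S + N₀) :=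
          mul_le_mul_of_nonneg_right key hSN.le
      _ = ‖(inner ℂ h (w N₀) : ℂ)‖ ^ 2 := by field_simp
  -- upper bound
  have upper : ∀ N₀ : ℝ, 0 < N₀ → ‖(inner ℂ h (w N₀) : ℂ)‖ ^ 2 ≤ ‖h‖ ^ 2 := by
    intro N₀ hN₀
    have := norm_inner_le_norm (𝕜 := ℂ) h (w N₀)
    rw [hw_norm N₀ hN₀, mul_one] at this
    exact pow_le_pow_left₀ (norm_nonneg _) this 2
  -- squeeze
  have hlim : Tendsto (fun N₀ : ℝ => ‖h‖ ^ 2 * (N₀ / (L + N₀))) atTop (nhds (‖h‖ ^ 2)) := by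
    have h1 : Tendsto (fun N₀ : ℝ => N₀ / (L + N₀)) atTop (nhds 1) := by
      have h2 : Tendsto (fun N₀ : ℝ => L / (L + N₀)) atTop (nhds 0) :=
        tendsto_const_nhds.div_atTop (tendsto_atTop_add_const_left _ _ tendsto_id)
      have h3 : Tendsto (fun N₀ : ℝ => 1 - L / (L + N₀)) atTop (nhds 1) := by
        simpa using tendsto_const_nhds.sub h2
      apply h3.congr'
      filter_upwards [eventually_gt_atTop 0] with x hx
      have hne : L + x ≠ 0 := by linarith
      field_simp
      ring
    have := (tendsto_const_nhds (x := ‖h‖ ^ 2) (f := atTop)).mul h1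
    simpa using this
  apply tendsto_of_tendsto_of_tendsto_of_le_of_le' hlim tendsto_const_nhds
  · filter_upwards [eventually_gt_atTop 0] with x hx using lower x hx
  · filter_upwards [eventually_gt_atTop 0] with x hx using upper x hx
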